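/- Let G be a cograph. If G contains an induced P3 and an induced 2K2, then G contains an induced subgraph isomorphic to P3 ∪ K2 or to the butterfly. -/

import Mathlib

open SimpleGraph

/-- The disjoint union `G ∪ H` of two vertex-disjoint graphs. -/
def gUnion {α β : Type*} (G : SimpleGraph α) (H : SimpleGraph β) : SimpleGraph (α ⊕ β) where
  Adj x y :=
    match x, y with
    | Sum.inl a, Sum.inl b => G.Adj a b
    | Sum.inr a, Sum.inr b => H.Adj a b
    | _, _ => False
  symm := by constructor; rintro (a | a) (b | b) h
             · exact G.symm.symm _ _ h
             · exact h.elim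
             · exact h.elim
             · exact H.symm.symm _ _ h
  loopless := by constructor; rintro (a | a) h
                 · exact G.loopless.irrefl a h
                 · exact H.loopless.irrefl a h

/-- The join `G ⊕ H` of two vertex-disjoint graphs: disjoint union plus all edges across. -/
def gJoin {α β : Type*} (G : SimpleGraph α) (H : SimpleGraph β) : SimpleGraph (α ⊕ β) where
  Adj x y :=
    match x, y with
    | Sum.inl a, Sum.inl b => G.Adj a b
    | Sum.inr a, Sum.inr b => H.Adj a b
    | _, _ => True
  symm := by constructor; rintro (a | a) (b | b) h
             · exact G.symm.symm _ _ h
             · trivial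
             · trivial
             · exact H.symm.symm _ _ h
  loopless := by constructor; rintro (a | a) h
                 · exact G.loopless.irrefl a h
                 · exact H.loopless.irrefl a h

/-- The complete graph `Kₙ`. -/
def KG (n : ℕ) : SimpleGraph (Fin n) := ⊤

/-- The edgeless graph `nK₁` on `n` vertices. -/
def EG (n : ℕ) : SimpleGraph (Fin n) := ⊥

/-- `G` contains `H`, i.e. `H` is isomorphic to an induced subgraph of `G`. -/
def Contains {α β : Type*} (G : SimpleGraph α) (H : SimpleGraph β) : Prop :=
  Nonempty (H ↪g G)

/-- A cograph is a `P₄`-free graph. -/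
def IsCograph {α : Type*} (G : SimpleGraph α) : Prop :=
  ¬ Contains G (pathGraph 4)

/-- `G` is partitionable: its vertex set splits into a part inducing a triangle-free
graph and a part inducing a `P₃`-free graph. -/
def Partitionable {α : Type*} (G : SimpleGraph α) : Prop :=
  ∃ A : Set α, (G.induce A).CliqueFree 3 ∧ ¬ Contains (G.induce Aᶜ) (pathGraph 3)

/-- `G` is monopolar: its vertex set splits into an independent set and a part
inducing a `P₃`-free graph. -/
def Monopolar {α : Type*} (G : SimpleGraph α) : Prop :=
  ∃ A : Set α, (G.induce A).CliqueFree 2 ∧ ¬ Contains (G.induce Aᶜ) (pathGraph 3)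

/-- `G` is (1,2)-partitionable: its vertex set can be partitioned into at most one
clique and at most two independent sets (equivalently, covered by them). -/
def OneTwoPartitionable {α : Type*} (G : SimpleGraph α) : Prop :=
  ∃ C S₁ S₂ : Set α, C ∪ S₁ ∪ S₂ = Set.univ ∧ G.IsClique C ∧
    (G.induce S₁).CliqueFree 2 ∧ (G.induce S₂).CliqueFree 2

/-- A threshold graph is a `(2K₂, C₄, P₄)`-free graph. -/
def IsThreshold {α : Type*} (G : SimpleGraph α) : Prop :=
  ¬ Contains G (gUnion (KG 2) (KG 2)) ∧ ¬ Contains G (cycleGraph 4) ∧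
    ¬ Contains G (pathGraph 4)

/-- The diamond `K₂ ⊕ 2K₁`. -/
def diamond := gJoin (KG 2) (EG 2)

/-- The paw `K₁ ⊕ (K₁ ∪ K₂)`. -/
def paw := gJoin (KG 1) (gUnion (KG 1) (KG 2))

/-- The butterfly `K₁ ⊕ 2K₂`. -/
def butterfly := gJoin (KG 1) (gUnion (KG 2) (KG 2))

def twoK2 := gUnion (KG 2) (KG 2)

def twoK3 := gUnion (KG 3) (KG 3)

def K2uK1 := gUnion (KG 2) (KG 1)


section helpers
variable {α : Type*} (G : SimpleGraph α)

lemma containsP4 {w x y z : α} (hwy : w ≠ y) (hwz : w ≠ z) (hxz : x ≠ z)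
    (h1 : G.Adj w x) (h2 : G.Adj x y) (h3 : G.Adj y z)
    (n1 : ¬ G.Adj w y) (n2 : ¬ G.Adj w z) (n3 : ¬ G.Adj x z) :
    Contains G (pathGraph 4) := by
  have hwx := h1.ne
  have hxy := h2.ne
  have hyz := h3.ne
  have n1' : ¬ G.Adj y w := fun h => n1 h.symm
  have n2' : ¬ G.Adj z w := fun h => n2 h.symm
  have n3' : ¬ G.Adj z x := fun h => n3 h.symm
  refine ⟨⟨⟨![w,x,y,z], ?_⟩, ?_⟩⟩
  · intro i j hij
    fin_cases i <;> fin_cases j <;> simp_all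
  · intro i j
    show G.Adj (![w,x,y,z] i) (![w,x,y,z] j) ↔ _
    fin_cases i <;> fin_cases j <;>
      simp [pathGraph_adj, h1, h2, h3, h1.symm, h2.symm, h3.symm, n1, n2, n3, n1', n2', n3',
        G.irrefl] <;> decide
end helpers
section helpers2
variable {α : Type*} (G : SimpleGraph α)

lemma containsP3K2 {a b c d e : α} (hac : a ≠ c)
    (had : a ≠ d) (hae : a ≠ e) (hbd : b ≠ d) (hbe : b ≠ e) (hcd : c ≠ d) (hce : c ≠ e)
    (hab : G.Adj a b) (hbc : G.Adj b c) (hde : G.Adj d e)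
    (nac : ¬ G.Adj a c) (nad : ¬ G.Adj a d) (nae : ¬ G.Adj a e)
    (nbd : ¬ G.Adj b d) (nbe : ¬ G.Adj b e) (ncd : ¬ G.Adj c d) (nce : ¬ G.Adj c e) :
    Contains G (gUnion (pathGraph 3) (KG 2)) := by
  have h1 := hab.ne
  have h2 := hbc.ne
  have h3 := hde.ne
  have nac' : ¬ G.Adj c a := fun h => nac h.symm
  have nad' : ¬ G.Adj d a := fun h => nad h.symm
  have nae' : ¬ G.Adj e a := fun h => nae h.symm
  have nbd' : ¬ G.Adj d b := fun h => nbd h.symm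
  have nbe' : ¬ G.Adj e b := fun h => nbe h.symm
  have ncd' : ¬ G.Adj d c := fun h => ncd h.symm
  have nce' : ¬ G.Adj e c := fun h => nce h.symm
  refine ⟨⟨⟨Sum.elim ![a,b,c] ![d,e], ?_⟩, ?_⟩⟩
  · rintro (i|i) (j|j) hij <;> fin_cases i <;> fin_cases j <;> simp_all
  · show ∀ {i j}, G.Adj (Sum.elim ![a,b,c] ![d,e] i) (Sum.elim ![a,b,c] ![d,e] j) ↔ _
    rintro (i|i) (j|j) <;> fin_cases i <;> fin_cases j <;>
      simp [gUnion, KG, pathGraph_adj, hab, hbc, hde, hab.symm, hbc.symm, hde.symm,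
        nac, nad, nae, nbd, nbe, ncd, nce, nac', nad', nae', nbd', nbe', nce', ncd',
        G.irrefl]

lemma containsButterfly {v d e f g : α}
    (hdf : d ≠ f) (hdg : d ≠ g) (hef : e ≠ f) (heg : e ≠ g)
    (hvd : G.Adj v d) (hve : G.Adj v e) (hvf : G.Adj v f) (hvg : G.Adj v g)
    (hde : G.Adj d e) (hfg : G.Adj f g)
    (ndf : ¬ G.Adj d f) (ndg : ¬ G.Adj d g) (nef : ¬ G.Adj e f) (neg : ¬ G.Adj e g) :
    Contains G butterfly := by
  have h1 := hvd.ne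
  have h2 := hve.ne
  have h3 := hvf.ne
  have h4 := hvg.ne
  have h5 := hde.ne
  have h6 := hfg.ne
  have ndf' : ¬ G.Adj f d := fun h => ndf h.symm
  have ndg' : ¬ G.Adj g d := fun h => ndg h.symm
  have nef' : ¬ G.Adj f e := fun h => nef h.symm
  have neg' : ¬ G.Adj g e := fun h => neg h.symm
  refine ⟨⟨⟨Sum.elim (fun _ => v) (Sum.elim ![d,e] ![f,g]), ?_⟩, ?_⟩⟩
  · rintro (i|i|i) (j|j|j) hij <;> fin_cases i <;> fin_cases j <;> simp_all
  · show ∀ {i j}, G.Adj (Sum.elim (fun _ => v) (Sum.elim ![d,e] ![f,g]) i)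
        (Sum.elim (fun _ => v) (Sum.elim ![d,e] ![f,g]) j) ↔ _
    rintro (i|i|i) (j|j|j) <;> fin_cases i <;> fin_cases j <;>
      simp [butterfly, gJoin, gUnion, KG, hvd, hve, hvf, hvg, hde, hfg,
        hvd.symm, hve.symm, hvf.symm, hvg.symm, hde.symm, hfg.symm,
        ndf, ndg, nef, neg, ndf', ndg', nef', neg', G.irrefl]

end helpers2
section mainhelpers
variable {α : Type*} (G : SimpleGraph α)

lemma crossH (hcog : ¬ Contains G (pathGraph 4)) (hbf : ¬ Contains G butterfly)
    {d e f g v : α} (hde : G.Adj d e) (hfg : G.Adj f g)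
    (hdf : d ≠ f) (hdg : d ≠ g) (hef : e ≠ f) (heg : e ≠ g)
    (ndf : ¬ G.Adj d f) (ndg : ¬ G.Adj d g) (nef : ¬ G.Adj e f) (neg : ¬ G.Adj e g)
    (hvd : G.Adj v d) (hvf : G.Adj v f) : False := by
  by_cases hve : G.Adj v e
  · by_cases hvg : G.Adj v g
    · exact hbf (containsButterfly G hdf hdg hef heg hvd hve hvf hvg hde hfg ndf ndg nef neg)
    · exact hcog (containsP4 G
        (by intro h; subst h; exact ndg hvd.symm)
        (fun h => hdg h.symm) (fun h => hdf h.symm)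
        hfg.symm hvf.symm hvd
        (fun h => hvg h.symm) (fun h => ndg h.symm) (fun h => ndf h.symm))
  · exact hcog (containsP4 G
      (by intro h; subst h; exact nef hvf)
      hef hdf hde.symm hvd.symm hvf
      (fun h => hve h.symm) nef ndf)

lemma edgeP4 (hcog : ¬ Contains G (pathGraph 4)) {d f u w : α}
    (hud : G.Adj u d) (hwf : G.Adj w f) (huw : G.Adj u w)
    (ndw : ¬ G.Adj d w) (ndf : ¬ G.Adj d f) (nuf : ¬ G.Adj u f)
    (hdw : d ≠ w) (hdf : d ≠ f) (huf : u ≠ f) : False :=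
  hcog (containsP4 G hdw hdf huf hud.symm huw hwf ndw ndf nuf)

lemma propP3 (hcog : ¬ Contains G (pathGraph 4)) {d e a b c : α}
    (hde : G.Adj d e) (had : G.Adj a d) (hab : G.Adj a b) (hbc : G.Adj b c)
    (nac : ¬ G.Adj a c) (hac : a ≠ c)
    (hbd : b ≠ d) (hbe : b ≠ e) (nbd : ¬ G.Adj b d) (nbe : ¬ G.Adj b e)
    (hcd : c ≠ d) (ncd : ¬ G.Adj c d) : False := by
  by_cases hae : G.Adj a e
  · exact hcog (containsP4 G
      (fun h => hbd h.symm) (fun h => hcd h.symm) hac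
      had.symm hab hbc
      (fun h => nbd h.symm) (fun h => ncd h.symm) nac)
  · exact hcog (containsP4 G
      (by intro h; subst h; exact nbe hab.symm)
      (fun h => hbe h.symm) (fun h => hbd h.symm)
      hde.symm had.symm hab
      (fun h => hae h.symm) (fun h => nbe h.symm) (fun h => nbd h.symm))

end mainhelpers

theorem stmt_1 {α : Type*} [Fintype α] (G : SimpleGraph α) (hcog : IsCograph G)
    (hP3 : Contains G (pathGraph 3)) (h2K2 : Contains G twoK2) :
    Contains G (gUnion (pathGraph 3) (KG 2)) ∨ Contains G butterfly := by
  by_cases hbf : Contains G butterfly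
  · exact Or.inr hbf
  left
  have hcog' : ¬ Contains G (pathGraph 4) := hcog
  suffices key : ∀ a b c d e f g : α, G.Adj a b → G.Adj b c → ¬ G.Adj a c → a ≠ c →
      G.Adj d e → G.Adj f g → ¬ G.Adj d f → ¬ G.Adj d g → ¬ G.Adj e f → ¬ G.Adj e g →
      d ≠ f → d ≠ g → e ≠ f → e ≠ g → Contains G (gUnion (pathGraph 3) (KG 2)) by
    obtain ⟨p⟩ := hP3
    obtain ⟨q⟩ := h2K2
    refine key (p 0) (p 1) (p 2) (q (Sum.inl 0)) (q (Sum.inl 1)) (q (Sum.inr 0)) (q (Sum.inr 1))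
      (p.map_adj_iff.mpr (by rw [pathGraph_adj]; decide))
      (p.map_adj_iff.mpr (by rw [pathGraph_adj]; decide))
      (fun h => by have := p.map_adj_iff.mp h; rw [pathGraph_adj] at this; revert this; decide)
      (fun h => by have := p.injective h; simp at this)
      (q.map_adj_iff.mpr (by show twoK2.Adj (Sum.inl 0) (Sum.inl 1); simp only [twoK2, gUnion, KG]; decide))
      (q.map_adj_iff.mpr (by show twoK2.Adj (Sum.inr 0) (Sum.inr 1); simp only [twoK2, gUnion, KG]; decide))
      (fun h => q.map_adj_iff.mp h) (fun h => q.map_adj_iff.mp h)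
      (fun h => q.map_adj_iff.mp h) (fun h => q.map_adj_iff.mp h)
      (fun h => by have := q.injective h; simp at this)
      (fun h => by have := q.injective h; simp at this)
      (fun h => by have := q.injective h; simp at this)
      (fun h => by have := q.injective h; simp at this)
  intro a b c d e f g hab hbc nac hac hde hfg ndf ndg nef neg hdf hdg hef heg
  -- no vertex is on both sides
  have noLR : ∀ v, (v = d ∨ v = e ∨ G.Adj v d ∨ G.Adj v e) →
      (v = f ∨ v = g ∨ G.Adj v f ∨ G.Adj v g) → False := by
    rintro v (rfl | rfl | h | h) hR
    · rcases hR with rfl | rfl | h' | h'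
      · exact hdf rfl
      · exact hdg rfl
      · exact ndf h'
      · exact ndg h'
    · rcases hR with rfl | rfl | h' | h'
      · exact hef rfl
      · exact heg rfl
      · exact nef h'
      · exact neg h'
    · rcases hR with rfl | rfl | h' | h'
      · exact ndf h.symm
      · exact ndg h.symm
      · exact crossH G hcog' hbf hde hfg hdf hdg hef heg ndf ndg nef neg h h'
      · exact crossH G hcog' hbf hde hfg.symm hdg hdf heg hef ndg ndf neg nef h h'
    · rcases hR with rfl | rfl | h' | h'
      · exact nef h.symm
      · exact neg h.symm
      · exact crossH G hcog' hbf hde.symm hfg hef heg hdf hdg nef neg ndf ndg h h'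
      · exact crossH G hcog' hbf hde.symm hfg.symm heg hef hdg hdf neg nef ndg ndf h h'
  -- no edge between the two sides
  have noE : ∀ u w, (u = d ∨ u = e ∨ G.Adj u d ∨ G.Adj u e) →
      (w = f ∨ w = g ∨ G.Adj w f ∨ G.Adj w g) → G.Adj u w → False := by
    intro u w hLu hRw huw
    have hRu : ¬ (u = f ∨ u = g ∨ G.Adj u f ∨ G.Adj u g) := fun h => noLR u hLu h
    have hLw : ¬ (w = d ∨ w = e ∨ G.Adj w d ∨ G.Adj w e) := fun h => noLR w h hRw
    push_neg at hRu hLw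
    obtain ⟨huf, hug, nuf, nug⟩ := hRu
    obtain ⟨hwd, hwe, nwd, nwe⟩ := hLw
    rcases hLu with rfl | rfl | h | h
    · exact nwd huw.symm
    · exact nwe huw.symm
    · rcases hRw with rfl | rfl | h' | h'
      · exact nuf huw
      · exact nug huw
      · exact edgeP4 G hcog' h h' huw (fun hh => nwd hh.symm) ndf nuf
          (fun hh => hwd hh.symm) hdf huf
      · exact edgeP4 G hcog' h h' huw (fun hh => nwd hh.symm) ndg nug
          (fun hh => hwd hh.symm) hdg hug
    · rcases hRw with rfl | rfl | h' | h'
      · exact nuf huw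
      · exact nug huw
      · exact edgeP4 G hcog' h h' huw (fun hh => nwe hh.symm) nef nuf
          (fun hh => hwe hh.symm) hef huf
      · exact edgeP4 G hcog' h h' huw (fun hh => nwe hh.symm) neg nug
          (fun hh => hwe hh.symm) heg hug
  -- dichotomy
  by_cases hR : (a = f ∨ a = g ∨ G.Adj a f ∨ G.Adj a g) ∨
      (b = f ∨ b = g ∨ G.Adj b f ∨ G.Adj b g) ∨ (c = f ∨ c = g ∨ G.Adj c f ∨ G.Adj c g)
  · -- some P3 vertex on the fg side : then no P3 vertex on the de side; use d,e
    have hLa : ¬ (a = d ∨ a = e ∨ G.Adj a d ∨ G.Adj a e) := by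
      intro hLa
      rcases hR with hRa | hRb | hRc
      · exact noLR a hLa hRa
      · exact noE a b hLa hRb hab
      · -- L a, R c : propagate
        have hLb : ¬ (b = d ∨ b = e ∨ G.Adj b d ∨ G.Adj b e) := fun h => noE b c h hRc hbc
        have hLc : ¬ (c = d ∨ c = e ∨ G.Adj c d ∨ G.Adj c e) := fun h => noLR c h hRc
        push_neg at hLb hLc
        obtain ⟨hbd, hbe, nbd, nbe⟩ := hLb
        obtain ⟨hcd, hce, ncd, nce⟩ := hLc
        rcases hLa with rfl | rfl | h | h
        · exact nbd hab.symm
        · exact nbe hab.symm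
        · exact propP3 G hcog' hde h hab hbc nac hac hbd hbe nbd nbe hcd ncd
        · exact propP3 G hcog' hde.symm h hab hbc nac hac hbe hbd nbe nbd hce nce
    have hLb : ¬ (b = d ∨ b = e ∨ G.Adj b d ∨ G.Adj b e) := by
      intro hLb
      rcases hR with hRa | hRb | hRc
      · exact noE b a hLb hRa hab.symm
      · exact noLR b hLb hRb
      · exact noE b c hLb hRc hbc
    have hLc : ¬ (c = d ∨ c = e ∨ G.Adj c d ∨ G.Adj c e) := by
      intro hLc
      rcases hR with hRa | hRb | hRc
      · -- L c, R a : propagate along c b a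
        have hLb' : ¬ (b = d ∨ b = e ∨ G.Adj b d ∨ G.Adj b e) := hLb
        push_neg at hLb'
        obtain ⟨hbd, hbe, nbd, nbe⟩ := hLb'
        have hLa' : ¬ (a = d ∨ a = e ∨ G.Adj a d ∨ G.Adj a e) := hLa
        push_neg at hLa'
        obtain ⟨had, hae, nad, nae⟩ := hLa'
        have nca : ¬ G.Adj c a := fun h => nac h.symm
        rcases hLc with rfl | rfl | h | h
        · exact nbd hbc
        · exact nbe hbc
        · exact propP3 G hcog' hde h hbc.symm hab.symm nca (Ne.symm hac) hbd hbe nbd nbe had nad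
        · exact propP3 G hcog' hde.symm h hbc.symm hab.symm nca (Ne.symm hac) hbe hbd nbe nbd hae nae
      · exact noE c b hLc hRb hbc.symm
      · exact noLR c hLc hRc
    push_neg at hLa hLb hLc
    obtain ⟨had, hae, nad, nae⟩ := hLa
    obtain ⟨hbd, hbe, nbd, nbe⟩ := hLb
    obtain ⟨hcd, hce, ncd, nce⟩ := hLc
    exact containsP3K2 G hac had hae hbd hbe hcd hce hab hbc hde nac nad nae nbd nbe ncd nce
  · push_neg at hR
    obtain ⟨⟨haf, hag, naf, nag⟩, ⟨hbf, hbg, nbf, nbg⟩, ⟨hcf, hcg, ncf, ncg⟩⟩ := hR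
    exact containsP3K2 G hac haf hag hbf hbg hcf hcg hab hbc hfg nac naf nag nbf nbg ncf ncg
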